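/- If a positive distribution P⁰ is a minimizer on L ∩ Δ₊ of a strictly convex f-divergence H_h(P‖P*) that is strictly decreasing along every non-stationary Markov chain with equilibrium P*, then P⁰ is a minimal element of the (global) Markov order ≻_{P*} on L ∩ Δ₊; conversely every local Markov-order minimum on L is a global Markov-order minimal point. -/

import Mathlib

/-- `P¹` is reachable from `P⁰` by (the time-one map of) a Markov chain with
equilibrium `P*`: there is a rate matrix satisfying the balance condition and a
solution of the Kolmogorov equation from `P⁰` at `t = 0` to `P¹` at `t = 1`. -/
def MarkovPre {n : ℕ} (ps : Fin n → ℝ) (P0 P1 : Fin n → ℝ) : Prop :=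
  ∃ q : Fin n → Fin n → ℝ,
    (∀ i j, i ≠ j → 0 ≤ q i j) ∧ (∀ i, q i i = 0) ∧
    (∀ i, ∑ j ∈ Finset.univ.erase i, q i j * ps j
      = (∑ j ∈ Finset.univ.erase i, q j i) * ps i) ∧
    ∃ p : ℝ → Fin n → ℝ, p 0 = P0 ∧ p 1 = P1 ∧
      ∀ t ∈ Set.Icc (0 : ℝ) 1, ∀ i, HasDerivAt (fun s => p s i)
        (∑ j ∈ Finset.univ.erase i, (q i j * p t j - q j i * p t i)) t

/-- The (global) Markov order with equilibrium `P*`: the closed transitive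
closure of the reachability relation `MarkovPre`. -/
def MarkovOrder {n : ℕ} (ps : Fin n → ℝ) (P0 P1 : Fin n → ℝ) : Prop :=
  (P0, P1) ∈ closure {pr : (Fin n → ℝ) × (Fin n → ℝ) |
    Relation.TransGen (MarkovPre ps) pr.1 pr.2}


open Finset Set

lemma tangent_le {g : ℝ → ℝ} (hg : ConvexOn ℝ Set.univ g) (hgd : Differentiable ℝ g)
    (x y : ℝ) : deriv g x * (y - x) ≤ g y - g x := by
  rcases lt_trichotomy x y with hlt | heq | hgt
  · have := hg.deriv_le_slope (Set.mem_univ x) (Set.mem_univ y) hlt (hgd x)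
    rw [slope_def_field, le_div_iff₀ (sub_pos.2 hlt)] at this
    linarith
  · simp [heq]
  · have := hg.slope_le_of_hasDerivWithinAt_Iio (Set.mem_univ y) (Set.mem_univ x) hgt
      ((hgd x).hasDerivAt.hasDerivWithinAt)
    rw [slope_def_field, div_le_iff₀ (sub_pos.2 hgt)] at this
    linarith

lemma key_ineq {n : ℕ} {ps : Fin n → ℝ} (hps : ∀ i, 0 < ps i)
    {g : ℝ → ℝ} (hg : ConvexOn ℝ Set.univ g) (hgd : Differentiable ℝ g)
    {q : Fin n → Fin n → ℝ} (hq : ∀ i j, i ≠ j → 0 ≤ q i j)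
    (hbal : ∀ i, ∑ j, q i j * ps j = (∑ j, q j i) * ps i)
    (p : Fin n → ℝ) :
    ∑ i, deriv g (p i / ps i) * (∑ j, (q i j * p j - q j i * p i)) ≤ 0 := by
  set c : Fin n → ℝ := fun i => p i / ps i with hc
  have hpc : ∀ i, p i = ps i * c i := by
    intro i
    rw [hc, eq_comm, mul_comm]
    exact div_mul_cancel₀ _ (ne_of_gt (hps i))
  have h1 : ∀ i, ∑ j, (q i j * p j - q j i * p i)
      = ∑ j, q i j * ps j * (c j - c i) := by
    intro i
    have e0 : ∑ j, (q i j * p j - q j i * p i)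
        = ∑ j, q i j * ps j * c j - (∑ j, q j i) * p i := by
      rw [Finset.sum_sub_distrib, ← Finset.sum_mul]
      congr 1
      exact Finset.sum_congr rfl (fun j _ => by rw [hpc j]; ring)
    have h2 : (∑ j, q j i) * p i = (∑ j, q i j * ps j) * c i := by
      rw [hpc i, ← mul_assoc, ← hbal i]
    rw [e0, h2, Finset.sum_mul, ← Finset.sum_sub_distrib]
    exact Finset.sum_congr rfl (fun j _ => by ring)
  calc ∑ i, deriv g (c i) * (∑ j, (q i j * p j - q j i * p i))
      = ∑ i, ∑ j, deriv g (c i) * (q i j * ps j * (c j - c i)) := by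
        refine Finset.sum_congr rfl (fun i _ => ?_)
        rw [h1 i, Finset.mul_sum]
    _ ≤ ∑ i, ∑ j, q i j * ps j * (g (c j) - g (c i)) := by
        refine Finset.sum_le_sum (fun i _ => Finset.sum_le_sum (fun j _ => ?_))
        rcases eq_or_ne i j with rfl | hij
        · simp
        · have hq' : 0 ≤ q i j * ps j := mul_nonneg (hq i j hij) (hps j).le
          have := tangent_le hg hgd (c i) (c j)
          calc deriv g (c i) * (q i j * ps j * (c j - c i))
              = (q i j * ps j) * (deriv g (c i) * (c j - c i)) := by ring
            _ ≤ (q i j * ps j) * (g (c j) - g (c i)) := mul_le_mul_of_nonneg_left this hq'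
    _ = 0 := by
        have e1 : ∀ i, ∑ j, q i j * ps j * (g (c j) - g (c i))
            = ∑ j, q i j * (ps j * g (c j)) - ∑ j, q j i * (ps i * g (c i)) := by
          intro i
          have : ∑ j, q i j * ps j * (g (c j) - g (c i))
              = ∑ j, (q i j * (ps j * g (c j)) - q i j * ps j * g (c i)) :=
            Finset.sum_congr rfl (fun j _ => by ring)
          rw [this, Finset.sum_sub_distrib]
          congr 1
          rw [← Finset.sum_mul, hbal i, Finset.sum_mul, Finset.sum_mul]
          exact Finset.sum_congr rfl (fun j _ => by ring)
        rw [Finset.sum_congr rfl (fun i _ => e1 i), Finset.sum_sub_distrib]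
        rw [Finset.sum_comm (f := fun i j => q i j * (ps j * g (c j)))]
        exact sub_self _

section MainLemmas
variable {n : ℕ} {ps : Fin n → ℝ}

noncomputable def Hfun (ps : Fin n → ℝ) (g : ℝ → ℝ) (p : Fin n → ℝ) : ℝ :=
  ∑ i, ps i * g (p i / ps i)

lemma step_mono (hps : ∀ i, 0 < ps i)
    {g : ℝ → ℝ} (hg : ConvexOn ℝ Set.univ g) (hgd : Differentiable ℝ g)
    {a b : Fin n → ℝ} (hab : MarkovPre ps a b) :
    Hfun ps g b ≤ Hfun ps g a := by
  obtain ⟨q, hq, hqd, hbal, p, hp0, hp1, hder⟩ := hab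
  -- convert erase sums to full sums
  have hbal' : ∀ i, ∑ j, q i j * ps j = (∑ j, q j i) * ps i := by
    intro i
    have e1 : ∑ j ∈ Finset.univ.erase i, q i j * ps j = ∑ j, q i j * ps j :=
      Finset.sum_erase _ (by rw [hqd i]; ring)
    have e2 : ∑ j ∈ Finset.univ.erase i, q j i = ∑ j, q j i :=
      Finset.sum_erase _ (hqd i)
    rw [← e1, ← e2]; exact hbal i
  have hder' : ∀ t ∈ Set.Icc (0:ℝ) 1, ∀ i, HasDerivAt (fun s => p s i)
      (∑ j, (q i j * p t j - q j i * p t i)) t := by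
    intro t ht i
    have e : ∑ j ∈ Finset.univ.erase i, (q i j * p t j - q j i * p t i)
        = ∑ j, (q i j * p t j - q j i * p t i) :=
      Finset.sum_erase _ (by ring)
    rw [← e]; exact hder t ht i
  set φ : ℝ → ℝ := fun t => ∑ i, ps i * g (p t i / ps i) with hφ
  have hφd : ∀ t ∈ Set.Icc (0:ℝ) 1, HasDerivAt φ
      (∑ i, deriv g (p t i / ps i) * (∑ j, (q i j * p t j - q j i * p t i))) t := by
    intro t ht
    refine HasDerivAt.fun_sum (fun i _ => ?_)
    have h1 : HasDerivAt (fun s => p s i / ps i)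
        ((∑ j, (q i j * p t j - q j i * p t i)) / ps i) t :=
      (hder' t ht i).div_const _
    have h2 : HasDerivAt (fun s => g (p s i / ps i))
        (deriv g (p t i / ps i) * ((∑ j, (q i j * p t j - q j i * p t i)) / ps i)) t :=
      (hgd _).hasDerivAt.comp t h1
    have h3 := h2.const_mul (ps i)
    have hne : ps i ≠ 0 := ne_of_gt (hps i)
    have hval : ps i * (deriv g (p t i / ps i) *
        ((∑ j, (q i j * p t j - q j i * p t i)) / ps i))
        = deriv g (p t i / ps i) * (∑ j, (q i j * p t j - q j i * p t i)) := by
      field_simp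
    rw [hval] at h3
    exact h3
  have hmono : AntitoneOn φ (Set.Icc (0:ℝ) 1) := by
    apply antitoneOn_of_deriv_nonpos (convex_Icc 0 1)
    · intro t ht
      exact (hφd t ht).continuousAt.continuousWithinAt
    · intro t ht
      rw [interior_Icc] at ht
      exact (hφd t (Set.mem_Icc_of_Ioo ht)).differentiableAt.differentiableWithinAt
    · intro t ht
      rw [interior_Icc] at ht
      rw [(hφd t (Set.mem_Icc_of_Ioo ht)).deriv]
      exact key_ineq hps hg hgd hq hbal' (p t)
  have := hmono (Set.left_mem_Icc.2 zero_le_one) (Set.right_mem_Icc.2 zero_le_one) zero_le_one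
  simpa [hφ, Hfun, hp0, hp1] using this

lemma lemA (hps : ∀ i, 0 < ps i)
    {g : ℝ → ℝ} (hg : ConvexOn ℝ Set.univ g) (hgd : Differentiable ℝ g)
    {a b : Fin n → ℝ} (hab : MarkovOrder ps a b) :
    Hfun ps g b ≤ Hfun ps g a := by
  have hcont : Continuous (fun p : Fin n → ℝ => Hfun ps g p) := by
    refine continuous_finset_sum _ (fun i _ => ?_)
    exact continuous_const.mul (hgd.continuous.comp ((continuous_apply i).div_const _))
  have hcl : IsClosed {pr : (Fin n → ℝ) × (Fin n → ℝ) | Hfun ps g pr.2 ≤ Hfun ps g pr.1} :=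
    isClosed_le (hcont.comp continuous_snd) (hcont.comp continuous_fst)
  have hsub : {pr : (Fin n → ℝ) × (Fin n → ℝ) |
      Relation.TransGen (MarkovPre ps) pr.1 pr.2}
      ⊆ {pr : (Fin n → ℝ) × (Fin n → ℝ) | Hfun ps g pr.2 ≤ Hfun ps g pr.1} := by
    rintro ⟨x, y⟩ (hxy : Relation.TransGen _ x y)
    induction hxy with
    | single h => exact step_mono hps hg hgd h
    | tail _ h ih => exact le_trans (step_mono hps hg hgd h) ih
  exact closure_minimal hsub hcl hab

end MainLemmas


lemma hasDerivAt_glue {f1 f2 : ℝ → ℝ} {a d : ℝ} (h1 : HasDerivAt f1 d a)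
    (h2 : HasDerivAt f2 d a) (heq : f1 a = f2 a) :
    HasDerivAt (fun x => if x ≤ a then f1 x else f2 x) d a := by
  have hIic : HasDerivWithinAt (fun x => if x ≤ a then f1 x else f2 x) d (Set.Iic a) a := by
    refine (h1.hasDerivWithinAt).congr (fun x hx => ?_) (by simp)
    simp [Set.mem_Iic.mp hx]
  have hIci : HasDerivWithinAt (fun x => if x ≤ a then f1 x else f2 x) d (Set.Ici a) a := by
    refine (h2.hasDerivWithinAt).congr (fun x hx => ?_) (by simp [heq])
    rcases eq_or_lt_of_le (Set.mem_Ici.mp hx) with rfl | hlt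
    · simp [heq]
    · simp [not_le.mpr hlt]
  have := hIic.union hIci
  rw [Set.Iic_union_Ici] at this
  exact hasDerivWithinAt_univ.mp this


noncomputable def lext (h : ℝ → ℝ) (ε : ℝ) : ℝ → ℝ :=
  fun x => if x ≤ ε then h ε + deriv h ε * (x - ε) else h x

lemma lext_eq {h : ℝ → ℝ} {ε x : ℝ} (hx : ε ≤ x) : lext h ε x = h x := by
  unfold lext
  rcases eq_or_lt_of_le hx with rfl | hlt
  · simp
  · simp [not_le.mpr hlt]

lemma lext_hasDerivAt {h : ℝ → ℝ} {ε : ℝ} (hε : 0 < ε)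
    (hd : ∀ x ∈ Set.Ioi (0:ℝ), DifferentiableAt ℝ h x) (x : ℝ) :
    HasDerivAt (lext h ε) (if x ≤ ε then deriv h ε else deriv h x) x := by
  rcases lt_trichotomy x ε with hlt | heq | hgt
  · rw [if_pos hlt.le]
    have haff : HasDerivAt (fun y : ℝ => h ε + deriv h ε * (y - ε)) (deriv h ε) x := by
      simpa using (((hasDerivAt_id x).sub_const ε).const_mul (deriv h ε)).const_add (h ε)
    refine haff.congr_of_eventuallyEq ?_
    filter_upwards [eventually_lt_nhds hlt] with y hy
    simp [lext, hy.le]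
  · subst heq
    rw [if_pos le_rfl]
    have haff : HasDerivAt (fun y : ℝ => h x + deriv h x * (y - x)) (deriv h x) x := by
      simpa using (((hasDerivAt_id x).sub_const x).const_mul (deriv h x)).const_add (h x)
    exact hasDerivAt_glue haff ((hd x hε).hasDerivAt) (by simp)
  · rw [if_neg (not_le.mpr hgt)]
    refine ((hd x (lt_trans hε hgt)).hasDerivAt).congr_of_eventuallyEq ?_
    filter_upwards [eventually_gt_nhds hgt] with y hy
    simp [lext, not_le.mpr hy]

lemma lext_differentiable {h : ℝ → ℝ} {ε : ℝ} (hε : 0 < ε)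
    (hd : ∀ x ∈ Set.Ioi (0:ℝ), DifferentiableAt ℝ h x) : Differentiable ℝ (lext h ε) :=
  fun x => (lext_hasDerivAt hε hd x).differentiableAt

lemma lext_convexOn {h : ℝ → ℝ} {ε : ℝ} (hε : 0 < ε)
    (hsc : ConvexOn ℝ (Set.Ioi 0) h)
    (hd : ∀ x ∈ Set.Ioi (0:ℝ), DifferentiableAt ℝ h x) :
    ConvexOn ℝ Set.univ (lext h ε) := by
  have hmono : MonotoneOn (deriv h) (Set.Ioi 0) := hsc.monotoneOn_deriv hd
  refine MonotoneOn.convexOn_of_deriv convex_univ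
    ((lext_differentiable hε hd).continuous.continuousOn)
    ((lext_differentiable hε hd).differentiableOn) ?_
  rw [interior_univ]
  intro x _ y _ hxy
  rw [(lext_hasDerivAt hε hd x).deriv, (lext_hasDerivAt hε hd y).deriv]
  rcases le_or_gt x ε with hx | hx
  · rcases le_or_gt y ε with hy | hy
    · simp [hx, hy]
    · rw [if_pos hx, if_neg (not_le.mpr hy)]
      exact hmono hε (lt_trans hε hy) hy.le
  · rw [if_neg (not_le.mpr hx), if_neg (not_le.mpr (lt_of_lt_of_le hx hxy))]
    exact hmono (lt_trans hε hx) (lt_trans hε (lt_of_lt_of_le hx hxy)) hxy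

/-- smoothed hinge `(x - t)₊` -/
noncomputable def hingeS (t δ : ℝ) : ℝ → ℝ :=
  fun x => if x ≤ t then 0 else if x ≤ t + δ then (x - t)^2/(2*δ) else (x - t) - δ/2

lemma hingeS_hasDerivAt {t δ : ℝ} (hδ : 0 < δ) (x : ℝ) :
    HasDerivAt (hingeS t δ) (if x ≤ t then 0 else if x ≤ t + δ then (x - t)/δ else 1) x := by
  have hquad : ∀ y : ℝ, HasDerivAt (fun z => (z - t)^2/(2*δ)) ((y - t)/δ) y := by
    intro y
    have h1 : HasDerivAt (fun z : ℝ => (z - t)^2) (2*(y - t)) y := by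
      simpa using ((hasDerivAt_id y).sub_const t).fun_pow 2
    have := h1.div_const (2*δ)
    rw [mul_div_mul_left _ _ (two_ne_zero' ℝ)] at this
    exact this
  have hlin : ∀ y : ℝ, HasDerivAt (fun z : ℝ => (z - t) - δ/2) 1 y := by
    intro y
    simpa using ((hasDerivAt_id y).sub_const t).sub_const (δ/2)
  rcases lt_trichotomy x t with hlt | rfl | hgt
  · rw [if_pos hlt.le]
    refine (hasDerivAt_const x (0:ℝ)).congr_of_eventuallyEq ?_
    filter_upwards [eventually_lt_nhds hlt] with y hy
    simp [hingeS, hy.le]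
  · rw [if_pos le_rfl]
    have hinner : HasDerivAt (fun z => if z ≤ x + δ then (z - x)^2/(2*δ) else (z - x) - δ/2)
        0 x := by
      have h0 := hquad x
      rw [show (x - x)/δ = 0 by simp] at h0
      refine h0.congr_of_eventuallyEq ?_
      filter_upwards [eventually_lt_nhds (by linarith : x < x + δ)] with y hy
      simp [hy.le]
    have hglue := hasDerivAt_glue (f1 := fun _ => (0:ℝ))
      (f2 := fun z => if z ≤ x + δ then (z - x)^2/(2*δ) else (z - x) - δ/2)
      (a := x) (d := 0) (hasDerivAt_const x 0) hinner
      (by simp [hδ.le])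
    exact hglue
  · rw [if_neg (not_le.mpr hgt)]
    rcases lt_trichotomy x (t + δ) with hlt2 | rfl | hgt2
    · rw [if_pos hlt2.le]
      refine (hquad x).congr_of_eventuallyEq ?_
      filter_upwards [eventually_lt_nhds hlt2, eventually_gt_nhds hgt] with y hy hy'
      simp [hingeS, not_le.mpr hy', hy.le]
    · rw [if_pos le_rfl]
      rw [show (t + δ - t)/δ = 1 by field_simp; ring]
      have hg : HasDerivAt (fun z => if z ≤ t + δ then (z - t)^2/(2*δ) else (z - t) - δ/2)
          1 (t + δ) := by
        have h1 := hquad (t + δ)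
        have e1 : (t + δ - t)/δ = 1 := by field_simp; ring
        rw [e1] at h1
        exact hasDerivAt_glue h1 (hlin (t + δ)) (by field_simp; ring)
      refine hg.congr_of_eventuallyEq ?_
      filter_upwards [eventually_gt_nhds hgt] with y hy
      simp [hingeS, not_le.mpr hy]
    · rw [if_neg (not_le.mpr hgt2)]
      refine (hlin x).congr_of_eventuallyEq ?_
      filter_upwards [eventually_gt_nhds hgt2] with y hy
      have : t < y := by linarith
      simp [hingeS, not_le.mpr hy, not_le.mpr this]

lemma hingeS_differentiable {t δ : ℝ} (hδ : 0 < δ) : Differentiable ℝ (hingeS t δ) :=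
  fun x => (hingeS_hasDerivAt hδ x).differentiableAt

lemma hingeS_convexOn {t δ : ℝ} (hδ : 0 < δ) : ConvexOn ℝ Set.univ (hingeS t δ) := by
  refine MonotoneOn.convexOn_of_deriv convex_univ
    ((hingeS_differentiable hδ).continuous.continuousOn)
    ((hingeS_differentiable hδ).differentiableOn) ?_
  rw [interior_univ]
  intro x _ y _ hxy
  rw [(hingeS_hasDerivAt hδ x).deriv, (hingeS_hasDerivAt hδ y).deriv]
  rcases le_or_gt x t with hx | hx
  · rw [if_pos hx]
    rcases le_or_gt y t with hy | hy
    · rw [if_pos hy]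
    · rw [if_neg (not_le.mpr hy)]
      rcases le_or_gt y (t + δ) with hy2 | hy2
      · rw [if_pos hy2]; apply div_nonneg <;> linarith
      · rw [if_neg (not_le.mpr hy2)]; norm_num
  · rw [if_neg (not_le.mpr hx), if_neg (not_le.mpr (lt_of_lt_of_le hx hxy))]
    rcases le_or_gt x (t + δ) with hx2 | hx2
    · rw [if_pos hx2]
      rcases le_or_gt y (t + δ) with hy2 | hy2
      · rw [if_pos hy2]
        gcongr
      · rw [if_neg (not_le.mpr hy2)]
        rw [div_le_one hδ]; linarith
    · rw [if_neg (not_le.mpr hx2), if_neg (not_le.mpr (lt_of_lt_of_le hx2 hxy))]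

lemma hingeS_le {t δ : ℝ} (hδ : 0 < δ) (x : ℝ) : hingeS t δ x ≤ max (x - t) 0 := by
  unfold hingeS
  rcases le_or_gt x t with hx | hx
  · rw [if_pos hx]; exact le_max_right _ _
  · rw [if_neg (not_le.mpr hx)]
    rcases le_or_gt x (t + δ) with hx2 | hx2
    · rw [if_pos hx2]
      have h1 : (x - t)^2/(2*δ) ≤ (x - t) := by
        rw [div_le_iff₀ (by linarith)]
        nlinarith
      exact le_trans h1 (le_max_left _ _)
    · rw [if_neg (not_le.mpr hx2)]
      have : (x - t) - δ/2 ≤ x - t := by linarith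
      exact le_trans this (le_max_left _ _)

lemma le_hingeS {t δ : ℝ} (hδ : 0 < δ) (x : ℝ) : max (x - t) 0 - δ/2 ≤ hingeS t δ x := by
  unfold hingeS
  rcases le_or_gt x t with hx | hx
  · rw [if_pos hx]
    have : max (x - t) 0 = 0 := max_eq_right (by linarith)
    rw [this]; linarith
  · rw [if_neg (not_le.mpr hx)]
    have hm : max (x - t) 0 = x - t := max_eq_left (by linarith)
    rw [hm]
    rcases le_or_gt x (t + δ) with hx2 | hx2
    · rw [if_pos hx2]
      have h1 : (x - t) - δ/2 ≤ (x - t)^2/(2*δ) := by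
        rw [le_div_iff₀ (by linarith : (0:ℝ) < 2*δ)]
        nlinarith [sq_nonneg (x - t - δ)]
      linarith
    · rw [if_neg (not_le.mpr hx2)]



def coneGen {n : ℕ} (c : Fin n → ℝ) (v : Fin n → ℝ) : Prop :=
  ∃ w : Fin n → Fin n → ℝ, (∀ i j, 0 ≤ w i j) ∧
    v = ∑ i, ∑ j ∈ Finset.univ.filter (fun j => j < i),
      (w i j * Real.sign (c j - c i)) •
        (fun l => (if l = i then (1 : ℝ) else 0) - if l = j then 1 else 0)

lemma coneGen_zero {n : ℕ} (c : Fin n → ℝ) : coneGen c 0 := by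
  refine ⟨0, fun i j => le_rfl, ?_⟩
  funext l
  simp

lemma coneGen_add {n : ℕ} {c v1 v2 : Fin n → ℝ} (h1 : coneGen c v1) (h2 : coneGen c v2) :
    coneGen c (v1 + v2) := by
  obtain ⟨w1, hw1, he1⟩ := h1
  obtain ⟨w2, hw2, he2⟩ := h2
  refine ⟨w1 + w2, fun i j => add_nonneg (hw1 i j) (hw2 i j), ?_⟩
  rw [he1, he2, ← Finset.sum_add_distrib]
  refine Finset.sum_congr rfl (fun i _ => ?_)
  rw [← Finset.sum_add_distrib]
  refine Finset.sum_congr rfl (fun j _ => ?_)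
  funext l
  simp [Pi.add_apply, Pi.smul_apply, smul_eq_mul]
  ring

lemma coneGen_single {n : ℕ} {c : Fin n → ℝ} {a b : Fin n} (hab : c a < c b) {δ : ℝ} (hδ : 0 ≤ δ) :
    coneGen c (fun l => δ * ((if l = a then 1 else 0) - (if l = b then 1 else 0))) := by
  have hne : a ≠ b := fun h => absurd (h ▸ hab) (lt_irrefl _)
  rcases hne.lt_or_gt with hlt | hlt
  · -- a < b : use pair (i,j) = (b,a), sign (c a - c b) = -1
    refine ⟨fun i j => if i = b ∧ j = a then δ else 0,
      fun i j => by dsimp only; split <;> simp [hδ], ?_⟩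
    rw [Finset.sum_eq_single b]
    · rw [Finset.sum_eq_single_of_mem a (by simp [hlt])]
      · funext l
        have hsgn : Real.sign (c a - c b) = -1 := Real.sign_of_neg (by linarith)
        simp [hsgn, Pi.smul_apply, smul_eq_mul]
        try ring
      · intro j _ hj
        simp [hj]
    · intro i _ hi
      apply Finset.sum_eq_zero
      intro j _
      simp [hi]
    · intro habs
      exact absurd (Finset.mem_univ b) habs
  · -- b < a : use pair (i,j) = (a,b), sign (c b - c a) = 1
    refine ⟨fun i j => if i = a ∧ j = b then δ else 0,
      fun i j => by dsimp only; split <;> simp [hδ], ?_⟩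
    rw [Finset.sum_eq_single a]
    · rw [Finset.sum_eq_single_of_mem b (by simp [hlt])]
      · funext l
        have hsgn : Real.sign (c b - c a) = 1 := Real.sign_of_pos (by linarith)
        simp [hsgn, Pi.smul_apply, smul_eq_mul]
        try ring
      · intro j _ hj
        simp [hj]
    · intro i _ hi
      apply Finset.sum_eq_zero
      intro j _
      simp [hi]
    · intro habs
      exact absurd (Finset.mem_univ a) habs

lemma cone_of_cuts {n : ℕ} (c : Fin n → ℝ) (k : ℕ) :
    ∀ v : Fin n → ℝ, (Finset.univ.filter (fun i => v i ≠ 0)).card ≤ k →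
    (∑ i, v i = 0) →
    (∀ t : ℝ, (∑ i ∈ Finset.univ.filter (fun i => t < c i), v i)
      + (∑ i ∈ Finset.univ.filter (fun i => c i = t), max (v i) 0) ≤ 0) →
    coneGen c v := by
  induction k with
  | zero =>
    intro v hcard hsum hcut
    have hv : ∀ i, v i = 0 := by
      intro i
      by_contra hvi
      have hmem : i ∈ Finset.univ.filter (fun i => v i ≠ 0) := by
        simp [hvi]
      have := Finset.card_eq_zero.mp (Nat.le_zero.mp hcard)
      rw [this] at hmem
      exact absurd hmem (Finset.notMem_empty i)
    have : v = 0 := funext hv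
    rw [this]; exact coneGen_zero c
  | succ k ih =>
    intro v hcard hsum hcut
    by_cases hpos : ∃ i, 0 < v i
    · obtain ⟨i0, hi0⟩ := hpos
      have hA : (Finset.univ.filter (fun i => 0 < v i)).Nonempty := ⟨i0, by simp [hi0]⟩
      obtain ⟨a, haA, hamax⟩ := Finset.exists_max_image (Finset.univ.filter (fun i => 0 < v i)) c hA
      have hva : 0 < v a := (Finset.mem_filter.mp haA).2
      have hamax' : ∀ i, 0 < v i → c i ≤ c a := fun i hi => hamax i (by simp [hi])
      -- find a source b above a
      have hUneg : ∑ i ∈ Finset.univ.filter (fun i => c a < c i), v i < 0 := by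
        have hcuta := hcut (c a)
        have h1 : v a ≤ ∑ i ∈ Finset.univ.filter (fun i => c i = c a), max (v i) 0 := by
          have hmem : a ∈ Finset.univ.filter (fun i => c i = c a) := by simp
          have := Finset.single_le_sum (f := fun i => max (v i) 0)
            (fun i _ => le_max_right _ _) hmem
          exact le_trans (le_max_left _ _) this
        linarith
      have hBex : ∃ i, v i < 0 ∧ c a < c i := by
        by_contra hno
        push_neg at hno
        have : (0:ℝ) ≤ ∑ i ∈ Finset.univ.filter (fun i => c a < c i), v i := by
          apply Finset.sum_nonneg
          intro i hi
          have hci : c a < c i := (Finset.mem_filter.mp hi).2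
          by_contra hvi
          exact absurd hci (not_lt.mpr (hno i (not_le.mp hvi)))
        linarith
      obtain ⟨b0, hb0⟩ := hBex
      have hBne : (Finset.univ.filter (fun i => v i < 0 ∧ c a < c i)).Nonempty :=
        ⟨b0, by simp [hb0.1, hb0.2]⟩
      obtain ⟨b, hbB, hbmin⟩ :=
        Finset.exists_min_image (Finset.univ.filter (fun i => v i < 0 ∧ c a < c i)) c hBne
      have hvb : v b < 0 := (Finset.mem_filter.mp hbB).2.1
      have hcab : c a < c b := (Finset.mem_filter.mp hbB).2.2
      have hbmin' : ∀ i, v i < 0 → c a < c i → c b ≤ c i := fun i h1 h2 =>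
        hbmin i (by simp [h1, h2])
      have hab : a ≠ b := fun h => absurd (h ▸ hcab) (lt_irrefl _)
      set δ := min (v a) (-v b) with hδdef
      have hδa : δ ≤ v a := min_le_left _ _
      have hδb : δ ≤ -v b := min_le_right _ _
      have hδpos : 0 < δ := lt_min hva (by linarith)
      set v' : Fin n → ℝ :=
        fun i => v i - δ * ((if i = a then 1 else 0) - (if i = b then 1 else 0)) with hv'
      have hv'a : v' a = v a - δ := by simp [hv', hab]
      have hv'b : v' b = v b + δ := by simp [hv', hab.symm]
      have hv'other : ∀ i, i ≠ a → i ≠ b → v' i = v i := by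
        intro i hia hib; simp [hv', hia, hib]
      have hv'a0 : 0 ≤ v' a := by rw [hv'a]; linarith
      have hv'b0 : v' b ≤ 0 := by rw [hv'b]; linarith
      -- the "zero gap" claim
      have hgap : ∀ i, c a < c i → c i < c b → v i = 0 := by
        intro i h1 h2
        rcases lt_trichotomy (v i) 0 with hv0 | hv0 | hv0
        · exact absurd (hbmin' i hv0 h1) (not_le.mpr h2)
        · exact hv0
        · exact absurd (hamax' i hv0) (not_le.mpr h1)
      -- helper for sums over any finset
      have hsub : ∀ s : Finset (Fin n), ∑ i ∈ s, v' i
          = ∑ i ∈ s, v i - δ * ((if a ∈ s then (1:ℝ) else 0) - (if b ∈ s then 1 else 0)) := by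
        intro s
        simp only [hv', Finset.sum_sub_distrib, ← Finset.mul_sum, Finset.sum_sub_distrib,
          Finset.sum_ite_eq', Finset.sum_boole]
        try simp [Finset.sum_ite_eq']
      -- support decreases
      have hcard' : (Finset.univ.filter (fun i => v' i ≠ 0)).card ≤ k := by
        have hzero : v' a = 0 ∨ v' b = 0 := by
          rcases le_total (v a) (-v b) with hm | hm
          · left; rw [hv'a, hδdef, min_eq_left hm]; ring
          · right; rw [hv'b, hδdef, min_eq_right hm]; ring
        obtain hz | hz := hzero
        · have hsubs : Finset.univ.filter (fun i => v' i ≠ 0)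
              ⊆ (Finset.univ.filter (fun i => v i ≠ 0)).erase a := by
            intro i hi
            have hvi' : v' i ≠ 0 := (Finset.mem_filter.mp hi).2
            have hia : i ≠ a := fun h => hvi' (h ▸ hz)
            refine Finset.mem_erase.mpr ⟨hia, Finset.mem_filter.mpr ⟨Finset.mem_univ _, ?_⟩⟩
            rcases eq_or_ne i b with rfl | hib
            · exact ne_of_lt hvb
            · rw [← hv'other i hia hib]; exact hvi'
          have h1 := Finset.card_le_card hsubs
          have h2 : a ∈ Finset.univ.filter (fun i => v i ≠ 0) := by simp [ne_of_gt hva]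
          rw [Finset.card_erase_of_mem h2] at h1
          omega
        · have hsubs : Finset.univ.filter (fun i => v' i ≠ 0)
              ⊆ (Finset.univ.filter (fun i => v i ≠ 0)).erase b := by
            intro i hi
            have hvi' : v' i ≠ 0 := (Finset.mem_filter.mp hi).2
            have hib : i ≠ b := fun h => hvi' (h ▸ hz)
            refine Finset.mem_erase.mpr ⟨hib, Finset.mem_filter.mpr ⟨Finset.mem_univ _, ?_⟩⟩
            rcases eq_or_ne i a with rfl | hia
            · exact ne_of_gt hva
            · rw [← hv'other i hia hib]; exact hvi'
          have h1 := Finset.card_le_card hsubs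
          have h2 : b ∈ Finset.univ.filter (fun i => v i ≠ 0) := by simp [ne_of_lt hvb]
          rw [Finset.card_erase_of_mem h2] at h1
          omega
      have hsum' : ∑ i, v' i = 0 := by
        rw [hsub Finset.univ]
        simp [hsum]
      have hcut' : ∀ t : ℝ, (∑ i ∈ Finset.univ.filter (fun i => t < c i), v' i)
          + (∑ i ∈ Finset.univ.filter (fun i => c i = t), max (v' i) 0) ≤ 0 := by
        intro t
        rcases lt_trichotomy t (c a) with ht1 | ht1 | ht1
        · -- t < c a : nothing changes
          have hUa : a ∈ Finset.univ.filter (fun i => t < c i) := by simp [ht1]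
          have hUb : b ∈ Finset.univ.filter (fun i => t < c i) := by
            simp [lt_trans ht1 hcab]
          have hZ : ∑ i ∈ Finset.univ.filter (fun i => c i = t), max (v' i) 0
              = ∑ i ∈ Finset.univ.filter (fun i => c i = t), max (v i) 0 := by
            refine Finset.sum_congr rfl (fun i hi => ?_)
            have hci : c i = t := (Finset.mem_filter.mp hi).2
            have hia : i ≠ a := by rintro rfl; exact (ne_of_gt ht1) hci
            have hib : i ≠ b := by rintro rfl; exact (ne_of_gt (lt_trans ht1 hcab)) hci
            rw [hv'other i hia hib]
          rw [hsub, hZ, if_pos hUa, if_pos hUb]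
          have := hcut t
          linarith
        · -- t = c a
          subst ht1
          have hUa : a ∉ Finset.univ.filter (fun i => c a < c i) := by simp
          have hUb : b ∈ Finset.univ.filter (fun i => c a < c i) := by simp [hcab]
          have haZ : a ∈ Finset.univ.filter (fun i => c i = c a) := by simp
          have hZsplit : ∑ i ∈ Finset.univ.filter (fun i => c i = c a), max (v' i) 0
              = (∑ i ∈ (Finset.univ.filter (fun i => c i = c a)).erase a, max (v' i) 0)
                + max (v' a) 0 := (Finset.sum_erase_add _ _ haZ).symm
          have hZsplit2 : ∑ i ∈ Finset.univ.filter (fun i => c i = c a), max (v i) 0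
              = (∑ i ∈ (Finset.univ.filter (fun i => c i = c a)).erase a, max (v i) 0)
                + max (v a) 0 := (Finset.sum_erase_add _ _ haZ).symm
          have hZe : ∑ i ∈ (Finset.univ.filter (fun i => c i = c a)).erase a, max (v' i) 0
              = ∑ i ∈ (Finset.univ.filter (fun i => c i = c a)).erase a, max (v i) 0 := by
            refine Finset.sum_congr rfl (fun i hi => ?_)
            have hia : i ≠ a := (Finset.mem_erase.mp hi).1
            have hci : c i = c a := (Finset.mem_filter.mp (Finset.mem_erase.mp hi).2).2
            have hib : i ≠ b := by rintro rfl; exact (ne_of_gt hcab) hci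
            rw [hv'other i hia hib]
          have hma : max (v' a) 0 = v a - δ := by rw [hv'a]; exact max_eq_left (by linarith)
          have hma2 : max (v a) 0 = v a := max_eq_left hva.le
          rw [hsub, if_neg hUa, if_pos hUb, hZsplit, hZe, hma]
          have := hcut (c a)
          rw [hZsplit2, hma2] at this
          linarith
        · -- c a < t
          rcases lt_trichotomy t (c b) with ht2 | ht2 | ht2
          · -- c a < t < c b : the interesting case
            have hUa : a ∉ Finset.univ.filter (fun i => t < c i) := by
              simp [not_lt.mpr ht1.le]
            have hUb : b ∈ Finset.univ.filter (fun i => t < c i) := by simp [ht2]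
            -- Z-part is zero
            have hZ0 : ∀ i ∈ Finset.univ.filter (fun i => c i = t), v' i = 0 := by
              intro i hi
              have hci : c i = t := (Finset.mem_filter.mp hi).2
              have hia : i ≠ a := by rintro rfl; exact (ne_of_lt ht1) hci
              have hib : i ≠ b := by rintro rfl; exact (ne_of_gt ht2) hci
              rw [hv'other i hia hib]
              exact hgap i (by rw [hci]; exact ht1) (by rw [hci]; exact ht2)
            have hZzero : ∑ i ∈ Finset.univ.filter (fun i => c i = t), max (v' i) 0 = 0 := by
              refine Finset.sum_eq_zero (fun i hi => ?_)
              rw [hZ0 i hi]; simp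
            -- bound the U-sum
            have hkey : ∑ i ∈ Finset.univ.filter (fun i => t < c i), v i ≤ -δ := by
              have hsubUb : (Finset.univ.filter (fun i => c b < c i))
                  ∪ (Finset.univ.filter (fun i => c i = c b))
                  ⊆ Finset.univ.filter (fun i => t < c i) := by
                intro i hi
                rcases Finset.mem_union.mp hi with h | h
                · have := (Finset.mem_filter.mp h).2
                  simp [lt_trans ht2 this]
                · have hcib := (Finset.mem_filter.mp h).2
                  simp [show t < c i from by rw [hcib]; exact ht2]
              have hout : ∀ i ∈ Finset.univ.filter (fun i => t < c i),
                  i ∉ (Finset.univ.filter (fun i => c b < c i))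
                    ∪ (Finset.univ.filter (fun i => c i = c b)) → v i = 0 := by
                intro i hi hni
                have hti : t < c i := (Finset.mem_filter.mp hi).2
                have h1 : ¬ (c b < c i) := fun h => hni (Finset.mem_union_left _ (by simp [h]))
                have h2 : c i ≠ c b := fun h => hni (Finset.mem_union_right _ (by simp [h]))
                exact hgap i (lt_trans ht1 hti) (lt_of_le_of_ne (not_lt.mp h1) h2)
              have hUU : ∑ i ∈ (Finset.univ.filter (fun i => c b < c i))
                  ∪ (Finset.univ.filter (fun i => c i = c b)), v i
                  = ∑ i ∈ Finset.univ.filter (fun i => t < c i), v i :=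
                Finset.sum_subset hsubUb hout
              have hdisj : Disjoint (Finset.univ.filter (fun i => c b < c i))
                  (Finset.univ.filter (fun i => c i = c b)) := by
                rw [Finset.disjoint_left]
                intro i h1 h2
                have e1 := (Finset.mem_filter.mp h1).2
                have e2 := (Finset.mem_filter.mp h2).2
                rw [e2] at e1
                exact lt_irrefl _ e1
              have hbZb : b ∈ Finset.univ.filter (fun i => c i = c b) := by simp
              have hZbsplit : ∑ i ∈ Finset.univ.filter (fun i => c i = c b), v i
                  = (∑ i ∈ (Finset.univ.filter (fun i => c i = c b)).erase b, v i) + v b :=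
                (Finset.sum_erase_add _ _ hbZb).symm
              have hZble : ∑ i ∈ (Finset.univ.filter (fun i => c i = c b)).erase b, v i
                  ≤ ∑ i ∈ (Finset.univ.filter (fun i => c i = c b)).erase b, max (v i) 0 :=
                Finset.sum_le_sum (fun i _ => le_max_left _ _)
              have hZbmax : (∑ i ∈ (Finset.univ.filter (fun i => c i = c b)).erase b,
                  max (v i) 0) + max (v b) 0
                  = ∑ i ∈ Finset.univ.filter (fun i => c i = c b), max (v i) 0 :=
                Finset.sum_erase_add _ _ hbZb
              have hmb : max (v b) 0 = 0 := max_eq_right hvb.le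
              have hcutb := hcut (c b)
              rw [← hUU, Finset.sum_union hdisj, hZbsplit]
              rw [hmb] at hZbmax
              linarith
            rw [hsub, if_neg hUa, if_pos hUb, hZzero]
            linarith
          · -- t = c b
            subst ht2
            have hUa : a ∉ Finset.univ.filter (fun i => c b < c i) := by
              simp [not_lt.mpr ht1.le]
            have hUb : b ∉ Finset.univ.filter (fun i => c b < c i) := by simp
            have hZ : ∑ i ∈ Finset.univ.filter (fun i => c i = c b), max (v' i) 0
                = ∑ i ∈ Finset.univ.filter (fun i => c i = c b), max (v i) 0 := by
              refine Finset.sum_congr rfl (fun i hi => ?_)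
              have hci : c i = c b := (Finset.mem_filter.mp hi).2
              rcases eq_or_ne i b with rfl | hib
              · rw [max_eq_right hv'b0, max_eq_right hvb.le]
              · have hia : i ≠ a := by rintro rfl; exact (ne_of_lt hcab) hci
                rw [hv'other i hia hib]
            rw [hsub, if_neg hUa, if_neg hUb, hZ]
            have := hcut (c b)
            linarith
          · -- c b < t
            have hUa : a ∉ Finset.univ.filter (fun i => t < c i) := by
              simp [not_lt.mpr ht1.le]
            have hUb : b ∉ Finset.univ.filter (fun i => t < c i) := by
              simp [not_lt.mpr ht2.le]
            have hZ : ∑ i ∈ Finset.univ.filter (fun i => c i = t), max (v' i) 0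
                = ∑ i ∈ Finset.univ.filter (fun i => c i = t), max (v i) 0 := by
              refine Finset.sum_congr rfl (fun i hi => ?_)
              have hci : c i = t := (Finset.mem_filter.mp hi).2
              have hia : i ≠ a := by rintro rfl; exact (ne_of_lt ht1) hci
              have hib : i ≠ b := by rintro rfl; exact (ne_of_lt ht2) hci
              rw [hv'other i hia hib]
            rw [hsub, if_neg hUa, if_neg hUb, hZ]
            have := hcut t
            linarith
      have hcv' := ih v' hcard' hsum' hcut'
      have hgen := coneGen_single (c := c) hcab hδpos.le
      have hvsplit : v = v' + (fun l => δ *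
          ((if l = a then 1 else 0) - (if l = b then 1 else 0))) := by
        funext i
        simp only [hv', Pi.add_apply]
        ring
      rw [hvsplit]
      exact coneGen_add hcv' hgen
    · -- no positive entries: v = 0
      push_neg at hpos
      have hv : ∀ i, v i = 0 := by
        have := (Finset.sum_eq_zero_iff_of_nonpos (fun i _ => hpos i)).mp hsum
        exact fun i => this i (Finset.mem_univ i)
      rw [funext hv]; exact coneGen_zero c


lemma cuts_of_hinges {n : ℕ} {ps p0 p1 : Fin n → ℝ} (hps : ∀ i, 0 < ps i)
    (hh : ∀ t : ℝ, ∑ i, ps i * max (p1 i / ps i - t) 0 ≤ ∑ i, ps i * max (p0 i / ps i - t) 0)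
    (t : ℝ) :
    (∑ i ∈ Finset.univ.filter (fun i => t < p0 i / ps i), (p1 i - p0 i))
      + (∑ i ∈ Finset.univ.filter (fun i => p0 i / ps i = t), max (p1 i - p0 i) 0) ≤ 0 := by
  have key : ∀ i, (if t < p0 i / ps i then (p1 i - p0 i) else 0)
      + (if p0 i / ps i = t then max (p1 i - p0 i) 0 else 0)
      ≤ ps i * max (p1 i / ps i - t) 0 - ps i * max (p0 i / ps i - t) 0 := by
    intro i
    have hpsne : ps i ≠ 0 := ne_of_gt (hps i)
    rcases lt_trichotomy t (p0 i / ps i) with hlt | heq | hgt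
    · rw [if_pos hlt, if_neg (ne_of_gt hlt), add_zero]
      have hm0 : max (p0 i / ps i - t) 0 = p0 i / ps i - t :=
        max_eq_left (by linarith)
      have hb : ps i * (p1 i / ps i - t) ≤ ps i * max (p1 i / ps i - t) 0 :=
        mul_le_mul_of_nonneg_left (le_max_left _ _) (hps i).le
      have e1 : ps i * (p1 i / ps i - t) = p1 i - ps i * t := by field_simp
      have e0 : ps i * (p0 i / ps i - t) = p0 i - ps i * t := by field_simp
      rw [hm0]
      linarith
    · rw [if_neg (by rw [← heq]; exact lt_irrefl t), if_pos heq.symm, zero_add]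
      have hm0 : max (p0 i / ps i - t) 0 = 0 := by
        rw [← heq, sub_self]; simp
      have e1 : ps i * (p1 i / ps i - t) = p1 i - p0 i := by
        have hp0t : ps i * t = p0 i := by
          rw [heq, mul_comm]
          exact div_mul_cancel₀ _ hpsne
        calc ps i * (p1 i / ps i - t) = p1 i / ps i * ps i - ps i * t := by ring
          _ = p1 i - p0 i := by rw [div_mul_cancel₀ _ hpsne, hp0t]
      have e2 : ps i * max (p1 i / ps i - t) 0 = max (p1 i - p0 i) 0 := by
        rw [mul_max_of_nonneg _ _ (hps i).le, e1, mul_zero]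
      rw [hm0, e2, mul_zero, sub_zero]
    · rw [if_neg (not_lt.mpr hgt.le), if_neg (ne_of_lt hgt), add_zero]
      have hm0 : max (p0 i / ps i - t) 0 = 0 := max_eq_right (by linarith)
      have : 0 ≤ ps i * max (p1 i / ps i - t) 0 :=
        mul_nonneg (hps i).le (le_max_right _ _)
      rw [hm0]
      linarith
  have hsumkey := Finset.sum_le_sum (fun i (_ : i ∈ Finset.univ) => key i)
  rw [Finset.sum_add_distrib, Finset.sum_sub_distrib] at hsumkey
  rw [Finset.sum_filter, Finset.sum_filter]
  have := hh t
  linarith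

lemma hinge_mono {n : ℕ} {ps : Fin n → ℝ} (hps : ∀ i, 0 < ps i) (hps1 : ∑ i, ps i = 1)
    {a b : Fin n → ℝ} (hab : MarkovOrder ps a b)
    (t : ℝ) :
    ∑ i, ps i * max (b i / ps i - t) 0 ≤ ∑ i, ps i * max (a i / ps i - t) 0 := by
  refine le_of_forall_pos_le_add (fun δ hδ => ?_)
  have hH := lemA hps (hingeS_convexOn (t := t) hδ) (hingeS_differentiable hδ) hab
  have h1 : ∑ i, ps i * max (b i / ps i - t) 0 ≤ Hfun ps (hingeS t δ) b + δ/2 := by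
    have : ∀ i ∈ Finset.univ, ps i * max (b i / ps i - t) 0
        ≤ ps i * hingeS t δ (b i / ps i) + ps i * (δ/2) := by
      intro i _
      have := le_hingeS (t := t) hδ (b i / ps i)
      have h2 : max (b i / ps i - t) 0 ≤ hingeS t δ (b i / ps i) + δ/2 := by linarith
      calc ps i * max (b i / ps i - t) 0 ≤ ps i * (hingeS t δ (b i / ps i) + δ/2) :=
            mul_le_mul_of_nonneg_left h2 (hps i).le
        _ = ps i * hingeS t δ (b i / ps i) + ps i * (δ/2) := by ring
    have hs := Finset.sum_le_sum this
    rw [Finset.sum_add_distrib, ← Finset.sum_mul, hps1, one_mul] at hs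
    exact hs
  have h2 : Hfun ps (hingeS t δ) a ≤ ∑ i, ps i * max (a i / ps i - t) 0 := by
    refine Finset.sum_le_sum (fun i _ => ?_)
    exact mul_le_mul_of_nonneg_left (hingeS_le hδ _) (hps i).le
  have : Hfun ps (hingeS t δ) b ≤ Hfun ps (hingeS t δ) a := hH
  have hd2 : δ/2 ≤ δ := by linarith
  linarith

lemma strict_mid {n : ℕ} {ps : Fin n → ℝ} (hps : ∀ i, 0 < ps i) {h : ℝ → ℝ}
    (hh : StrictConvexOn ℝ (Set.Ioi 0) h)
    {p0 p1 : Fin n → ℝ} (h0 : ∀ i, 0 < p0 i) (h1 : ∀ i, 0 < p1 i) (hne : p1 ≠ p0)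
    (heq : ∑ i, ps i * h (p1 i / ps i) = ∑ i, ps i * h (p0 i / ps i)) :
    ∑ i, ps i * h ((p0 i + p1 i)/2 / ps i) < ∑ i, ps i * h (p0 i / ps i) := by
  obtain ⟨i0, hi0⟩ : ∃ i, p1 i ≠ p0 i := by
    by_contra hc
    push_neg at hc
    exact hne (funext hc)
  have hmem0 : ∀ i, p0 i / ps i ∈ Set.Ioi (0:ℝ) := fun i => div_pos (h0 i) (hps i)
  have hmem1 : ∀ i, p1 i / ps i ∈ Set.Ioi (0:ℝ) := fun i => div_pos (h1 i) (hps i)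
  have hmid : ∀ i, (p0 i + p1 i)/2 / ps i
      = (1/2) * (p0 i / ps i) + (1/2) * (p1 i / ps i) := by
    intro i
    field_simp
  have hle : ∀ i ∈ Finset.univ, ps i * h ((p0 i + p1 i)/2 / ps i)
      ≤ ps i * ((1/2) * h (p0 i / ps i) + (1/2) * h (p1 i / ps i)) := by
    intro i _
    rcases eq_or_ne (p1 i) (p0 i) with he | hne'
    · rw [hmid i, he]
      have : (1/2 : ℝ) * (p0 i / ps i) + (1/2) * (p0 i / ps i) = p0 i / ps i := by ring
      rw [this]
      have : (1/2 : ℝ) * h (p0 i / ps i) + (1/2) * h (p0 i / ps i) = h (p0 i / ps i) := by ring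
      rw [this]
    · refine mul_le_mul_of_nonneg_left ?_ (hps i).le
      rw [hmid i]
      have := hh.2 (hmem0 i) (hmem1 i)
        (fun hc => hne' (by field_simp [ne_of_gt (hps i)] at hc; exact hc.symm))
        (by norm_num : (0:ℝ) < 1/2) (by norm_num : (0:ℝ) < 1/2) (by norm_num)
      simpa [smul_eq_mul] using this.le
  have hlt : ps i0 * h ((p0 i0 + p1 i0)/2 / ps i0)
      < ps i0 * ((1/2) * h (p0 i0 / ps i0) + (1/2) * h (p1 i0 / ps i0)) := by
    refine (mul_lt_mul_iff_right₀ (hps i0)).mpr ?_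
    rw [hmid i0]
    have := hh.2 (hmem0 i0) (hmem1 i0)
      (fun hc => hi0 (by field_simp [ne_of_gt (hps i0)] at hc; exact hc.symm))
      (by norm_num : (0:ℝ) < 1/2) (by norm_num : (0:ℝ) < 1/2) (by norm_num)
    simpa [smul_eq_mul] using this
  have hsum := Finset.sum_lt_sum hle ⟨i0, Finset.mem_univ i0, hlt⟩
  have hre : ∑ i, ps i * ((1/2) * h (p0 i / ps i) + (1/2) * h (p1 i / ps i))
      = (∑ i, ps i * h (p0 i / ps i))/2 + (∑ i, ps i * h (p1 i / ps i))/2 := by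
    rw [Finset.sum_div, Finset.sum_div, ← Finset.sum_add_distrib]
    refine Finset.sum_congr rfl (fun i _ => by ring)
  rw [hre, heq] at hsum
  linarith


/-- If a positive distribution `P⁰` minimizes on `L ∩ Δ₊` a
strictly convex f-divergence `H_h(·‖P*)` which strictly decreases along every
non-stationary Markov chain with equilibrium `P*`, then `P⁰` is a minimal
element of the global Markov order `≻_{P*}` on `L ∩ Δ₊`; conversely, every
local Markov-order minimum on `L` (cone condition) is a global Markov-order
minimal point. -/
theorem markov_order_minimal_points
    (n k : ℕ) (ps : Fin n → ℝ) (hps : ∀ i, 0 < ps i) (hps1 : ∑ i, ps i = 1)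
    (m : Fin (k + 1) → Fin n → ℝ) (M : Fin (k + 1) → ℝ)
    (p0 : Fin n → ℝ) (hp0 : ∀ i, 0 < p0 i) (hp01 : ∑ i, p0 i = 1)
    (hp0L : ∀ r, ∑ j, m r j * p0 j = M r) :
    -- minimality of `p0` in the Markov order on `L ∩ Δ₊`:
    let Minimal : Prop := ∀ p1 : Fin n → ℝ, (∀ i, 0 < p1 i) → (∑ i, p1 i = 1) →
      (∀ r, ∑ j, m r j * p1 j = M r) → p1 ≠ p0 → ¬ MarkovOrder ps p0 p1
    -- the local Markov-order minimum (cone) condition: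
    let LocalMin : Prop :=
      {p : Fin n → ℝ | ∃ v ∈ {v : Fin n → ℝ | ∃ w : Fin n → Fin n → ℝ,
          (∀ i j, 0 ≤ w i j) ∧
          v = ∑ i, ∑ j ∈ Finset.univ.filter (fun j => j < i),
            (w i j * Real.sign (p0 j / ps j - p0 i / ps i)) •
              (fun l => (if l = i then (1 : ℝ) else 0) - if l = j then 1 else 0)},
        p = p0 + v} ∩ {p | ∀ r, ∑ j, m r j * p j = M r} = {p0}
    ((∃ h : ℝ → ℝ, StrictConvexOn ℝ (Set.Ioi 0) h ∧
        (∀ x ∈ Set.Ioi (0 : ℝ), DifferentiableAt ℝ h x) ∧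
        -- `H_h` strictly decreases along every non-stationary chain:
        (∀ q : Fin n → Fin n → ℝ, (∀ i j, i ≠ j → 0 ≤ q i j) → (∀ i, q i i = 0) →
          (∀ i, ∑ j ∈ Finset.univ.erase i, q i j * ps j
            = (∑ j ∈ Finset.univ.erase i, q j i) * ps i) →
          ∀ p : Fin n → ℝ, (∀ i, 0 < p i) → (∑ i, p i = 1) →
            (fun i => ∑ j ∈ Finset.univ.erase i,
              q i j * ps j * (p j / ps j - p i / ps i)) ≠ 0 →
            ∑ i, deriv h (p i / ps i) *
              (∑ j ∈ Finset.univ.erase i,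
                q i j * ps j * (p j / ps j - p i / ps i)) < 0) ∧
        IsMinOn (fun p : Fin n → ℝ => ∑ i, ps i * h (p i / ps i))
          {p | (∀ i, 0 < p i) ∧ (∑ i, p i = 1) ∧ ∀ r, ∑ j, m r j * p j = M r}
          p0)
      → Minimal) ∧
    (LocalMin → Minimal) := by
  intro Minimal LocalMin
  have hn : (Finset.univ : Finset (Fin n)).Nonempty := by
    rcases Nat.eq_zero_or_pos n with rfl | hpos
    · exfalso; simpa using hp01
    · exact ⟨⟨0, hpos⟩, Finset.mem_univ _⟩
  constructor
  · rintro ⟨h, hsc, hdiff, _hstrict, hmin⟩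
    intro p1 h1pos h1sum h1L hne hMO
    set ε := Finset.univ.inf' hn (fun i => min (p0 i / ps i) (p1 i / ps i)) with hεdef
    have hεpos : 0 < ε := by
      rw [hεdef, Finset.lt_inf'_iff]
      intro i _
      exact lt_min (div_pos (hp0 i) (hps i)) (div_pos (h1pos i) (hps i))
    have hεle0 : ∀ i, ε ≤ p0 i / ps i := fun i =>
      le_trans (Finset.inf'_le _ (Finset.mem_univ i)) (min_le_left _ _)
    have hεle1 : ∀ i, ε ≤ p1 i / ps i := fun i =>
      le_trans (Finset.inf'_le _ (Finset.mem_univ i)) (min_le_right _ _)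
    have hconv := lext_convexOn hεpos hsc.convexOn hdiff
    have hdif := lext_differentiable hεpos hdiff
    have hlem := lemA hps hconv hdif hMO
    have he0 : Hfun ps (lext h ε) p0 = ∑ i, ps i * h (p0 i / ps i) :=
      Finset.sum_congr rfl (fun i _ => by rw [lext_eq (hεle0 i)])
    have he1 : Hfun ps (lext h ε) p1 = ∑ i, ps i * h (p1 i / ps i) :=
      Finset.sum_congr rfl (fun i _ => by rw [lext_eq (hεle1 i)])
    have hH10 : ∑ i, ps i * h (p1 i / ps i) ≤ ∑ i, ps i * h (p0 i / ps i) := by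
      rw [← he0, ← he1]; exact hlem
    have hp1mem : p1 ∈ {p : Fin n → ℝ |
        (∀ i, 0 < p i) ∧ (∑ i, p i = 1) ∧ ∀ r, ∑ j, m r j * p j = M r} :=
      ⟨h1pos, h1sum, h1L⟩
    have hH01 := isMinOn_iff.mp hmin p1 hp1mem
    have heq : ∑ i, ps i * h (p1 i / ps i) = ∑ i, ps i * h (p0 i / ps i) :=
      le_antisymm hH10 hH01
    have hzmem : (fun i => (p0 i + p1 i)/2) ∈ {p : Fin n → ℝ |
        (∀ i, 0 < p i) ∧ (∑ i, p i = 1) ∧ ∀ r, ∑ j, m r j * p j = M r} := by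
      refine ⟨fun i => by have := hp0 i; have := h1pos i; linarith, ?_, ?_⟩
      · rw [← Finset.sum_div, Finset.sum_add_distrib, hp01, h1sum]
        norm_num
      · intro r
        have : ∀ i ∈ Finset.univ, m r i * ((p0 i + p1 i)/2)
            = (m r i * p0 i)/2 + (m r i * p1 i)/2 := fun i _ => by ring
        rw [Finset.sum_congr rfl this, Finset.sum_add_distrib,
          ← Finset.sum_div, ← Finset.sum_div, hp0L r, h1L r]
        ring
    have hzlt := strict_mid hps hsc hp0 h1pos hne heq
    have := isMinOn_iff.mp hmin _ hzmem
    linarith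
  · intro hLMlet
    have hLM : {p : Fin n → ℝ | ∃ v ∈ {v : Fin n → ℝ | ∃ w : Fin n → Fin n → ℝ,
          (∀ i j, 0 ≤ w i j) ∧
          v = ∑ i, ∑ j ∈ Finset.univ.filter (fun j => j < i),
            (w i j * Real.sign (p0 j / ps j - p0 i / ps i)) •
              (fun l => (if l = i then (1 : ℝ) else 0) - if l = j then 1 else 0)},
        p = p0 + v} ∩ {p | ∀ r, ∑ j, m r j * p j = M r} = {p0} := hLMlet
    intro p1 h1pos h1sum h1L hne hMO
    have hhinges : ∀ t : ℝ, ∑ i, ps i * max (p1 i / ps i - t) 0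
        ≤ ∑ i, ps i * max (p0 i / ps i - t) 0 :=
      fun t => hinge_mono hps hps1 hMO t
    have hsumv : ∑ i, (p1 i - p0 i) = 0 := by
      rw [Finset.sum_sub_distrib, hp01, h1sum]; ring
    have hcone : coneGen (fun i => p0 i / ps i) (fun i => p1 i - p0 i) :=
      cone_of_cuts _ _ _ le_rfl hsumv (cuts_of_hinges hps hhinges)
    obtain ⟨w, hw, hrepr⟩ := hcone
    have hp1in : p1 ∈ ({p0} : Set (Fin n → ℝ)) := by
      rw [← hLM]
      refine ⟨⟨fun i => p1 i - p0 i, ⟨w, hw, hrepr⟩, ?_⟩, h1L⟩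
      funext i
      simp only [Pi.add_apply]
      ring
    exact hne hp1in
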